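/- Let Γ : L = ⊕_{g∈G} L_g be a G-grading of a finite-dimensional complex Lie algebra L by an abelian group G. Then Γ is a fine group grading if and only if Diag(Γ) is a MAD-group in Aut L. -/

import Mathlib

/-- The eigenspace of a Lie algebra automorphism `g` for the eigenvalue `μ`. -/
def eig {L : Type} [LieRing L] [LieAlgebra ℂ L] (g : L ≃ₗ⁅ℂ⁆ L) (μ : ℂ) :
    Submodule ℂ L where
  carrier := {x | g x = μ • x}
  add_mem' := by
    intro a b ha hb
    simp only [Set.mem_setOf_eq] at *
    rw [show g (a + b) = g a + g b from g.toLinearEquiv.map_add a b, ha, hb, smul_add]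
  zero_mem' := by
    show g 0 = μ • 0
    rw [show g 0 = 0 from g.toLinearEquiv.map_zero, smul_zero]
  smul_mem' := by
    intro c x hx
    simp only [Set.mem_setOf_eq] at *
    rw [show g (c • x) = c • g x from g.toLinearEquiv.map_smul c x, hx, smul_comm]

/-- An automorphism is diagonalizable when `L` is the direct sum of its eigenspaces. -/
def IsDiagonalizable {L : Type} [LieRing L] [LieAlgebra ℂ L] (g : L ≃ₗ⁅ℂ⁆ L) : Prop :=
  iSupIndep (fun μ : ℂ => eig g μ) ∧ (⨆ μ : ℂ, eig g μ) = ⊤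

/-- A group grading of `L` by an abelian group `G`. -/
def IsGroupGrading {L : Type} [LieRing L] [LieAlgebra ℂ L]
    {G : Type} [AddCommGroup G] (ℒ : G → Submodule ℂ L) : Prop :=
  iSupIndep ℒ ∧ (⨆ g, ℒ g) = ⊤ ∧
  ∀ g h : G, ∀ x ∈ ℒ g, ∀ y ∈ ℒ h, ⁅x, y⁆ ∈ ℒ (g + h)

/-- A fine group grading: a group grading such that every group grading refining it has
the same nonzero subspaces (i.e. it admits no proper group refinement). -/
def IsFineGroupGrading {L : Type} [LieRing L] [LieAlgebra ℂ L]
    {G : Type} [AddCommGroup G] (ℒ : G → Submodule ℂ L) : Prop :=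
  IsGroupGrading ℒ ∧
  ∀ (H : Type) [AddCommGroup H], ∀ M : H → Submodule ℂ L,
    IsGroupGrading M → (∀ h, M h ≠ ⊥ → ∃ g, M h ≤ ℒ g) →
    {V : Submodule ℂ L | V ≠ ⊥ ∧ ∃ h, M h = V} = {V : Submodule ℂ L | V ≠ ⊥ ∧ ∃ g, ℒ g = V}

/-- `Diag(Γ)`. -/
def Diag {L : Type} [LieRing L] [LieAlgebra ℂ L] {J : Type}
    (ℒ : J → Submodule ℂ L) : Set (L ≃ₗ⁅ℂ⁆ L) :=
  {f | ∀ j : J, ∃ α : ℂ, α ≠ 0 ∧ ∀ x ∈ ℒ j, f x = α • x}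

/-- A MAD-group in `Aut L`: a set of pairwise commuting diagonalizable automorphisms
containing every diagonalizable automorphism commuting with all its elements. -/
def IsMAD {L : Type} [LieRing L] [LieAlgebra ℂ L] (𝒢 : Set (L ≃ₗ⁅ℂ⁆ L)) : Prop :=
  (∀ f ∈ 𝒢, IsDiagonalizable f) ∧
  (∀ f ∈ 𝒢, ∀ f' ∈ 𝒢, ∀ x : L, f (f' x) = f' (f x)) ∧
  (∀ h : L ≃ₗ⁅ℂ⁆ L, IsDiagonalizable h → (∀ f ∈ 𝒢, ∀ x : L, h (f x) = f (h x)) → h ∈ 𝒢)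

namespace S5

/-- `q ↦ exp(2πiq)` as a homomorphism `ℚ →+ Additive ℂˣ`. -/
noncomputable def qexp : ℚ →+ Additive ℂˣ where
  toFun q := Additive.ofMul
    (Units.mk0 (Complex.exp (2 * Real.pi * Complex.I * q)) (Complex.exp_ne_zero _))
  map_zero' := by
    rw [ofMul_eq_zero]
    apply Units.ext
    show Complex.exp _ = 1
    norm_num
  map_add' := by
    intro a b
    show Additive.ofMul _ = Additive.ofMul _ + Additive.ofMul _
    rw [← ofMul_mul]
    apply congrArg Additive.ofMul
    apply Units.ext
    show Complex.exp _ = (_ * _ : ℂ)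
    push_cast
    rw [mul_add, Complex.exp_add]
    rfl

lemma two_pi_I_ne_zero : (2 * Real.pi * Complex.I : ℂ) ≠ 0 := by
  simp [Real.pi_ne_zero, Complex.I_ne_zero]

lemma qexp_eq_zero_iff (q : ℚ) : qexp q = 0 ↔ ∃ n : ℤ, (n : ℚ) = q := by
  constructor
  · intro h
    have h1 : Complex.exp (2 * Real.pi * Complex.I * q) = 1 := by
      have := congrArg (fun z : Additive ℂˣ => ((Additive.toMul z : ℂˣ) : ℂ)) h
      simpa [qexp] using this
    rw [Complex.exp_eq_one_iff] at h1
    obtain ⟨n, hn⟩ := h1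
    refine ⟨n, ?_⟩
    have h2 : ((n:ℚ):ℂ) = (q:ℂ) := by
      have h3 := mul_left_cancel₀ two_pi_I_ne_zero
        (show (2 * Real.pi * Complex.I : ℂ) * q = (2 * Real.pi * Complex.I) * n by
          rw [hn]; ring)
      push_cast
      rw [h3]
    exact_mod_cast h2
  · rintro ⟨n, rfl⟩
    have h1 : Complex.exp (2 * Real.pi * Complex.I * ((n:ℚ):ℂ)) = 1 := by
      rw [Complex.exp_eq_one_iff]
      exact ⟨n, by push_cast; ring⟩
    show Additive.ofMul (Units.mk0 (Complex.exp (2 * Real.pi * Complex.I * ((n:ℚ):ℂ)))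
      (Complex.exp_ne_zero _)) = 0
    rw [ofMul_eq_zero]
    apply Units.ext
    exact h1

/-- Characters into `ℂˣ` separate the points of any abelian group. -/
lemma exists_char {G : Type} [AddCommGroup G] {g : G} (hg : g ≠ 0) :
    ∃ χ : G →+ Additive ℂˣ, χ g ≠ 0 := by
  obtain ⟨c, hc⟩ := CharacterModule.exists_character_apply_ne_zero_of_ne_zero hg
  have hker : ∀ q ∈ AddSubgroup.zmultiples (1 : ℚ), qexp q = 0 := by
    rintro q hq
    obtain ⟨n, rfl⟩ := AddSubgroup.mem_zmultiples_iff.mp hq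
    exact (qexp_eq_zero_iff _).mpr ⟨n, by simp⟩
  let e : AddCircle (1:ℚ) →+ Additive ℂˣ := QuotientAddGroup.lift _ qexp hker
  refine ⟨e.comp (AddMonoidHom.mk' (fun x => c x) (map_add c)), fun h0 => ?_⟩
  obtain ⟨q, hq⟩ := QuotientAddGroup.mk_surjective (c g)
  have he : e (c g) = 0 := by simpa using h0
  rw [← hq] at he
  have hq0 : qexp q = 0 := by
    have h4 : e (QuotientAddGroup.mk q) = qexp q := QuotientAddGroup.lift_mk' _ _ q
    rwa [h4] at he
  obtain ⟨n, hn⟩ := (qexp_eq_zero_iff q).mp hq0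
  apply hc
  rw [← hq]
  exact (QuotientAddGroup.eq_zero_iff q).mpr
    (AddSubgroup.mem_zmultiples_iff.mpr ⟨n, by simpa using hn⟩)

open DirectSum

variable {L : Type} [LieRing L] [LieAlgebra ℂ L]

lemma mem_eig {g : L ≃ₗ⁅ℂ⁆ L} {μ : ℂ} {x : L} : x ∈ eig g μ ↔ g x = μ • x := Iff.rfl

lemma eig_indep (g : L ≃ₗ⁅ℂ⁆ L) : iSupIndep (fun μ : ℂ => eig g μ) := by
  have h := Module.End.eigenspaces_iSupIndep (R := ℂ) (M := L)
    (g.toLinearEquiv : L →ₗ[ℂ] L)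
  have he : (fun μ : ℂ => eig g μ)
      = fun μ => Module.End.eigenspace ((g.toLinearEquiv : L →ₗ[ℂ] L)) μ := by
    funext μ; ext x
    rw [mem_eig, Module.End.mem_eigenspace_iff]
    rfl
  rw [he]
  exact h

variable {G : Type} [AddCommGroup G] [DecidableEq G]

/-- The complex value of a character. -/
noncomputable def uval (m : Additive ℂˣ) : ℂ := ((Additive.toMul m : ℂˣ) : ℂ)

lemma uval_ne_zero (m : Additive ℂˣ) : uval m ≠ 0 := Units.ne_zero _

lemma uval_add (m m' : Additive ℂˣ) : uval (m + m') = uval m * uval m' := rfl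

lemma uval_neg_mul (m : Additive ℂˣ) : uval (-m) * uval m = 1 := by
  have : uval (-m + m) = uval (-m) * uval m := uval_add _ _
  rw [neg_add_cancel] at this
  rw [← this]
  rfl

lemma uval_inj {m m' : Additive ℂˣ} (h : uval m = uval m') : m = m' :=
  Additive.toMul.injective (Units.ext h)

variable {ℒ : G → Submodule ℂ L}

/-- The decomposition equivalence of an internal direct sum. -/
noncomputable def decE (hI : DirectSum.IsInternal ℒ) : (⨁ g, ℒ g) ≃ₗ[ℂ] L :=
  LinearEquiv.ofBijective (coeLinearMap ℒ) hI

lemma decE_of (hI : DirectSum.IsInternal ℒ) {g : G} (v : ℒ g) :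
    decE hI (DirectSum.of (fun g => (ℒ g : Submodule ℂ L)) g v) = v := by
  show coeLinearMap ℒ _ = _
  exact coeLinearMap_of ℒ g v

lemma decE_symm_of_mem (hI : DirectSum.IsInternal ℒ) {g : G} {x : L} (hx : x ∈ ℒ g) :
    (decE hI).symm x = DirectSum.of (fun g => (ℒ g : Submodule ℂ L)) g ⟨x, hx⟩ := by
  apply DFinsupp.ext
  intro j
  by_cases hj : j = g
  · subst hj
    rw [DirectSum.of_eq_same]
    exact hI.ofBijective_coeLinearMap_of_mem hx
  · rw [DirectSum.of_eq_of_ne _ _ _ hj]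
    exact hI.ofBijective_coeLinearMap_of_mem_ne (Ne.symm hj) hx

/-- The linear map acting on `ℒ g` as multiplication by `uval (χ g)`. -/
noncomputable def Fmap (hI : DirectSum.IsInternal ℒ) (χ : G →+ Additive ℂˣ) : L →ₗ[ℂ] L :=
  (coeLinearMap ℒ) ∘ₗ
    (DirectSum.toModule ℂ G _ fun g =>
      (DirectSum.lof ℂ G (fun g => (ℒ g : Submodule ℂ L)) g) ∘ₗ
        (uval (χ g) • (LinearMap.id : ℒ g →ₗ[ℂ] ℒ g))) ∘ₗ
    (decE hI).symm.toLinearMap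

lemma Fmap_of_mem (hI : DirectSum.IsInternal ℒ) (χ : G →+ Additive ℂˣ)
    {g : G} {x : L} (hx : x ∈ ℒ g) : Fmap hI χ x = uval (χ g) • x := by
  have h1 : (decE hI).symm x = DirectSum.of (fun g => (ℒ g : Submodule ℂ L)) g ⟨x, hx⟩ :=
    decE_symm_of_mem hI hx
  rw [Fmap]
  simp only [LinearMap.comp_apply, LinearEquiv.coe_coe]
  rw [h1, ← DirectSum.lof_eq_of ℂ, DirectSum.toModule_lof]
  simp only [LinearMap.comp_apply, LinearMap.smul_apply, LinearMap.id_apply]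
  rw [DirectSum.lof_eq_of ℂ, coeLinearMap_of]
  rfl

omit [AddCommGroup G] [DecidableEq G] in
lemma mem_top_iSup {J : Type} {M : J → Submodule ℂ L} (hSup : (⨆ j, M j) = ⊤) (x : L) :
    x ∈ ⨆ j, M j := by
  rw [hSup]; exact Submodule.mem_top

lemma Fmap_cancel (hI : DirectSum.IsInternal ℒ) (χ χ' : G →+ Additive ℂˣ)
    (hc : ∀ g, uval (χ g) * uval (χ' g) = 1)
    (hSup : (⨆ g, ℒ g) = ⊤) (x : L) : Fmap hI χ' (Fmap hI χ x) = x := by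
  refine Submodule.iSup_induction (motive := fun x => Fmap hI χ' (Fmap hI χ x) = x) ℒ
    (mem_top_iSup hSup x) ?_ ?_ ?_
  · intro g x hx
    rw [Fmap_of_mem hI χ hx, map_smul,
      Fmap_of_mem hI χ' hx, smul_smul, hc g, one_smul]
  · show Fmap hI χ' (Fmap hI χ (0:L)) = 0
    rw [map_zero, map_zero]
  · intro a b ha hb
    rw [map_add, map_add, ha, hb]

lemma uval_cancel (χ : G →+ Additive ℂˣ) (g : G) : uval (χ g) * uval ((-χ) g) = 1 := by
  have h1 : (-χ) g = -(χ g) := rfl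
  rw [h1, mul_comm]
  exact uval_neg_mul (χ g)

lemma uval_cancel' (χ : G →+ Additive ℂˣ) (g : G) : uval ((-χ) g) * uval (χ g) = 1 := by
  have h1 : (-χ) g = -(χ g) := rfl
  rw [h1]
  exact uval_neg_mul (χ g)

/-- The group-grading automorphism attached to a character. -/
noncomputable def gAut (hI : DirectSum.IsInternal ℒ) (hΓ : IsGroupGrading ℒ)
    (χ : G →+ Additive ℂˣ) : L ≃ₗ⁅ℂ⁆ L :=
  { toLinearMap := Fmap hI χ
    map_lie' := by
      intro x y
      show Fmap hI χ ⁅x, y⁆ = ⁅Fmap hI χ x, Fmap hI χ y⁆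
      obtain ⟨hInd, hSup, hbr⟩ := hΓ
      have key : ∀ g : G, ∀ x ∈ ℒ g, ∀ y : L,
          Fmap hI χ ⁅x, y⁆ = ⁅Fmap hI χ x, Fmap hI χ y⁆ := by
        intro g x hx y
        refine Submodule.iSup_induction
          (motive := fun y => Fmap hI χ ⁅x, y⁆ = ⁅Fmap hI χ x, Fmap hI χ y⁆) ℒ
          (mem_top_iSup hSup y) ?_ ?_ ?_
        · intro g' y hy
          rw [Fmap_of_mem hI χ hx, Fmap_of_mem hI χ hy,
            Fmap_of_mem hI χ (hbr g g' x hx y hy), smul_lie, lie_smul, smul_smul,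
            map_add, uval_add, mul_comm]
        · show Fmap hI χ ⁅x, (0:L)⁆ = ⁅Fmap hI χ x, Fmap hI χ (0:L)⁆
          rw [lie_zero, map_zero, lie_zero]
        · intro a b ha hb
          rw [lie_add, map_add, ha, hb, map_add, lie_add]
      refine Submodule.iSup_induction
        (motive := fun x => Fmap hI χ ⁅x, y⁆ = ⁅Fmap hI χ x, Fmap hI χ y⁆) ℒ
        (mem_top_iSup hSup x) (fun g x hx => key g x hx y) ?_ ?_
      · show Fmap hI χ ⁅(0:L), y⁆ = ⁅Fmap hI χ (0:L), Fmap hI χ y⁆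
        rw [zero_lie, map_zero, zero_lie]
      · intro a b ha hb
        rw [add_lie, map_add, ha, hb, map_add, add_lie]
    invFun := Fmap hI (-χ)
    left_inv := fun x => Fmap_cancel hI χ (-χ) (uval_cancel χ) hΓ.2.1 x
    right_inv := fun x => Fmap_cancel hI (-χ) χ (uval_cancel' χ) hΓ.2.1 x }

lemma gAut_apply_of_mem (hI : DirectSum.IsInternal ℒ) (hΓ : IsGroupGrading ℒ)
    (χ : G →+ Additive ℂˣ) {g : G} {x : L} (hx : x ∈ ℒ g) :
    gAut hI hΓ χ x = uval (χ g) • x :=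
  Fmap_of_mem hI χ hx

lemma gAut_mem_Diag (hI : DirectSum.IsInternal ℒ) (hΓ : IsGroupGrading ℒ)
    (χ : G →+ Additive ℂˣ) : gAut hI hΓ χ ∈ Diag ℒ :=
  fun g => ⟨uval (χ g), uval_ne_zero _, fun _ hx => gAut_apply_of_mem hI hΓ χ hx⟩

lemma isDiag_of_mem_Diag {J : Type} {M : J → Submodule ℂ L} (hSup : (⨆ j, M j) = ⊤)
    {f : L ≃ₗ⁅ℂ⁆ L} (hf : f ∈ Diag M) : IsDiagonalizable f := by
  refine ⟨eig_indep f, ?_⟩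
  rw [eq_top_iff, ← hSup]
  refine iSup_le fun j => ?_
  obtain ⟨α, hα, hfx⟩ := hf j
  refine le_trans ?_ (le_iSup (fun μ => eig f μ) α)
  intro x hx
  exact mem_eig.mpr (hfx x hx)

lemma commute_of_mem_Diag {J : Type} {M : J → Submodule ℂ L} (hSup : (⨆ j, M j) = ⊤)
    {f f' : L ≃ₗ⁅ℂ⁆ L} (hf : f ∈ Diag M) (hf' : f' ∈ Diag M) (x : L) :
    f (f' x) = f' (f x) := by
  refine Submodule.iSup_induction (motive := fun x => f (f' x) = f' (f x)) M
    (mem_top_iSup hSup x) ?_ ?_ ?_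
  · intro j x hx
    obtain ⟨α, hα, hfx⟩ := hf j
    obtain ⟨α', hα', hfx'⟩ := hf' j
    have h1 : f (f' x) = α' • (α • x) := by
      rw [hfx' x hx, show f (α' • x) = α' • f x from f.toLinearEquiv.map_smul α' x, hfx x hx]
    have h2 : f' (f x) = α • (α' • x) := by
      rw [hfx x hx, show f' (α • x) = α • f' x from f'.toLinearEquiv.map_smul α x, hfx' x hx]
    rw [h1, h2, smul_comm]
  · show f (f' (0:L)) = f' (f (0:L))
    rw [show f' (0:L) = 0 from f'.toLinearEquiv.map_zero,
      show f (0:L) = 0 from f.toLinearEquiv.map_zero,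
      show f' (0:L) = 0 from f'.toLinearEquiv.map_zero]
  · intro a b ha hb
    show f (f' (a + b)) = f' (f (a + b))
    rw [show f' (a + b) = f' a + f' b from f'.toLinearEquiv.map_add a b,
      show f (f' a + f' b) = f (f' a) + f (f' b) from f.toLinearEquiv.map_add _ _,
      ha, hb,
      show f (a + b) = f a + f b from f.toLinearEquiv.map_add a b,
      show f' (f a + f b) = f' (f a) + f' (f b) from f'.toLinearEquiv.map_add _ _]

/-- Projection onto the `g`-component of the grading. -/
noncomputable def proj (hI : DirectSum.IsInternal ℒ) (g : G) (x : L) : L :=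
  (((decE hI).symm x) g : L)

lemma proj_mem (hI : DirectSum.IsInternal ℒ) (g : G) (x : L) : proj hI g x ∈ ℒ g :=
  (((decE hI).symm x) g).2

lemma proj_of_mem (hI : DirectSum.IsInternal ℒ) {g : G} {x : L} (hx : x ∈ ℒ g) :
    proj hI g x = x := by
  show ((((LinearEquiv.ofBijective (coeLinearMap ℒ) hI).symm x) g : ℒ g) : L) = x
  rw [hI.ofBijective_coeLinearMap_of_mem hx]

lemma proj_of_mem_ne (hI : DirectSum.IsInternal ℒ) {g g' : G} (hne : g' ≠ g) {x : L}
    (hx : x ∈ ℒ g') : proj hI g x = 0 := by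
  show ((((LinearEquiv.ofBijective (coeLinearMap ℒ) hI).symm x) g : ℒ g) : L) = 0
  rw [hI.ofBijective_coeLinearMap_of_mem_ne hne hx]
  rfl

lemma proj_add (hI : DirectSum.IsInternal ℒ) (g : G) (x y : L) :
    proj hI g (x + y) = proj hI g x + proj hI g y := by
  show ((((decE hI).symm (x + y)) g : ℒ g) : L) = _
  rw [(decE hI).symm.map_add, DirectSum.add_apply]
  rfl

lemma proj_zero (hI : DirectSum.IsInternal ℒ) (g : G) : proj hI g 0 = 0 := by
  show ((((decE hI).symm 0) g : ℒ g) : L) = 0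
  rw [(decE hI).symm.map_zero]
  rfl

lemma proj_smul (hI : DirectSum.IsInternal ℒ) (g : G) (a : ℂ) (x : L) :
    proj hI g (a • x) = a • proj hI g x := by
  show ((((decE hI).symm (a • x)) g : ℒ g) : L) = _
  rw [(decE hI).symm.map_smul]
  rfl

lemma sum_proj (hI : DirectSum.IsInternal ℒ) (x : L) :
    ∃ s : Finset G, x = ∑ g ∈ s, proj hI g x := by
  classical
  refine ⟨((decE hI).symm x).support, ?_⟩
  calc x = decE hI ((decE hI).symm x) := ((decE hI).apply_symm_apply x).symm
    _ = decE hI (∑ g ∈ ((decE hI).symm x).support,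
          DirectSum.of (fun g => (ℒ g : Submodule ℂ L)) g (((decE hI).symm x) g)) := by
        rw [DirectSum.sum_support_of]
    _ = ∑ g ∈ ((decE hI).symm x).support,
          decE hI (DirectSum.of (fun g => (ℒ g : Submodule ℂ L)) g (((decE hI).symm x) g)) :=
        by exact map_sum ((decE hI).toLinearMap) _ _
    _ = ∑ g ∈ ((decE hI).symm x).support, proj hI g x := by
        refine Finset.sum_congr rfl fun g _ => ?_
        rw [decE_of]
        rfl

lemma preserve_of_comm (hI : DirectSum.IsInternal ℒ) (hΓ : IsGroupGrading ℒ)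
    (h : L ≃ₗ⁅ℂ⁆ L)
    (hcomm : ∀ f ∈ Diag ℒ, ∀ x : L, h (f x) = f (h x))
    {g₀ : G} {x : L} (hx : x ∈ ℒ g₀) : h x ∈ ℒ g₀ := by
  classical
  have hSup := hΓ.2.1
  have hχ : ∀ χ : G →+ Additive ℂˣ, gAut hI hΓ χ (h x) = uval (χ g₀) • h x := by
    intro χ
    have h1 := hcomm (gAut hI hΓ χ) (gAut_mem_Diag hI hΓ χ) x
    rw [gAut_apply_of_mem hI hΓ χ hx,
      show h (uval (χ g₀) • x) = uval (χ g₀) • h x from h.toLinearEquiv.map_smul _ x] at h1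
    exact h1.symm
  have hproj : ∀ (χ : G →+ Additive ℂˣ) (g : G) (z : L),
      proj hI g (gAut hI hΓ χ z) = uval (χ g) • proj hI g z := by
    intro χ g z
    refine Submodule.iSup_induction
      (motive := fun z => proj hI g (gAut hI hΓ χ z) = uval (χ g) • proj hI g z) ℒ
      (mem_top_iSup hSup z) ?_ ?_ ?_
    · intro g' z hz
      rw [gAut_apply_of_mem hI hΓ χ hz, proj_smul]
      by_cases hgg : g' = g
      · subst hgg
        rw [proj_of_mem hI hz]
      · rw [proj_of_mem_ne hI hgg hz, smul_zero, smul_zero]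
    · show proj hI g (gAut hI hΓ χ 0) = uval (χ g) • proj hI g 0
      rw [show gAut hI hΓ χ (0:L) = 0 from (gAut hI hΓ χ).toLinearEquiv.map_zero, proj_zero,
        smul_zero]
    · intro a b ha hb
      rw [show gAut hI hΓ χ (a + b) = gAut hI hΓ χ a + gAut hI hΓ χ b from
          (gAut hI hΓ χ).toLinearEquiv.map_add a b,
        proj_add, ha, hb, proj_add, smul_add]
  have hvan : ∀ g : G, g ≠ g₀ → proj hI g (h x) = 0 := by
    intro g hg
    by_contra h0
    have hval : ∀ χ : G →+ Additive ℂˣ, uval (χ g) = uval (χ g₀) := by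
      intro χ
      have h2 := hproj χ g (h x)
      rw [hχ χ, proj_smul] at h2
      have h3 : (uval (χ g) - uval (χ g₀)) • proj hI g (h x) = 0 := by
        rw [sub_smul, h2, sub_self]
      rcases smul_eq_zero.mp h3 with h4 | h4
      · exact sub_eq_zero.mp h4
      · exact absurd h4 h0
    obtain ⟨χ, hχne⟩ := exists_char (sub_ne_zero.mpr hg)
    apply hχne
    have h5 : χ g = χ g₀ := uval_inj (hval χ)
    rw [map_sub, h5, sub_self]
  obtain ⟨s, hs⟩ := sum_proj hI (h x)
  rw [hs]
  refine Submodule.sum_mem _ fun g _ => ?_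
  by_cases hgg : g = g₀
  · subst hgg; exact proj_mem hI g (h x)
  · rw [hvan g hgg]; exact Submodule.zero_mem _

lemma proj_comm_h (hI : DirectSum.IsInternal ℒ) (hΓ : IsGroupGrading ℒ)
    (h : L ≃ₗ⁅ℂ⁆ L)
    (hcomm : ∀ f ∈ Diag ℒ, ∀ x : L, h (f x) = f (h x))
    (g : G) (z : L) : proj hI g (h z) = h (proj hI g z) := by
  refine Submodule.iSup_induction (motive := fun z => proj hI g (h z) = h (proj hI g z)) ℒ
    (mem_top_iSup hΓ.2.1 z) ?_ ?_ ?_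
  · intro g' z hz
    have hz' : h z ∈ ℒ g' := preserve_of_comm hI hΓ h hcomm hz
    by_cases hgg : g' = g
    · subst hgg
      rw [proj_of_mem hI hz', proj_of_mem hI hz]
    · rw [proj_of_mem_ne hI hgg hz', proj_of_mem_ne hI hgg hz,
        show h (0:L) = 0 from h.toLinearEquiv.map_zero]
  · show proj hI g (h (0:L)) = h (proj hI g 0)
    rw [show h (0:L) = 0 from h.toLinearEquiv.map_zero, proj_zero,
      show h (0:L) = 0 from h.toLinearEquiv.map_zero]
  · intro a b ha hb
    calc proj hI g (h (a + b)) = proj hI g (h a + h b) := by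
          rw [show h (a + b) = h a + h b from h.toLinearEquiv.map_add a b]
      _ = proj hI g (h a) + proj hI g (h b) := proj_add hI g _ _
      _ = h (proj hI g a) + h (proj hI g b) := by rw [ha, hb]
      _ = h (proj hI g a + proj hI g b) := by
          exact (h.toLinearEquiv.map_add _ _).symm
      _ = h (proj hI g (a + b)) := by rw [proj_add]

lemma mem_Diag_of_fine (hI : DirectSum.IsInternal ℒ) (hΓ : IsGroupGrading ℒ)
    (hFine : IsFineGroupGrading ℒ) (h : L ≃ₗ⁅ℂ⁆ L) (hdiag : IsDiagonalizable h)
    (hcomm : ∀ f ∈ Diag ℒ, ∀ x : L, h (f x) = f (h x)) : h ∈ Diag ℒ := by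
  classical
  set M : G × Additive ℂˣ → Submodule ℂ L := fun p => ℒ p.1 ⊓ eig h (uval p.2) with hMdef
  have hMp : ∀ p : G × Additive ℂˣ, M p = ℒ p.1 ⊓ eig h (uval p.2) := fun p => rfl
  -- supremum is everything
  have hMsup : (⨆ p, M p) = ⊤ := by
    rw [eq_top_iff, ← hdiag.2]
    refine iSup_le fun μ => ?_
    by_cases hμ : μ = 0
    · subst hμ
      intro x hx
      have h1 : h x = 0 := by rw [mem_eig] at hx; rw [hx, zero_smul]
      have hx0 : x = 0 := by
        apply h.toLinearEquiv.injective
        rw [show h.toLinearEquiv x = h x from rfl, h1, map_zero]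
      rw [hx0]; exact Submodule.zero_mem _
    · intro x hx
      obtain ⟨s, hs⟩ := sum_proj hI x
      rw [hs]
      refine Submodule.sum_mem _ fun g _ => ?_
      have h1 : proj hI g x ∈ M (g, Additive.ofMul (Units.mk0 μ hμ)) := by
        rw [hMp]
        refine Submodule.mem_inf.mpr ⟨proj_mem hI g x, ?_⟩
        rw [mem_eig]
        have h2 : h (proj hI g x) = proj hI g (h x) := (proj_comm_h hI hΓ h hcomm g x).symm
        rw [h2, show h x = μ • x from hx, proj_smul]
        rfl
      exact Submodule.mem_iSup_of_mem _ h1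
  -- independence
  have hMind : iSupIndep M := by
    intro p₀
    obtain ⟨g₀, m₀⟩ := p₀
    set A : Submodule ℂ L := ⨆ (g : G) (_ : g ≠ g₀), ℒ g with hA
    set B : Submodule ℂ L := ⨆ (m : Additive ℂˣ) (_ : m ≠ m₀), (ℒ g₀ ⊓ eig h (uval m)) with hB
    have hBle : B ≤ ℒ g₀ := iSup₂_le fun m _ => inf_le_left
    have hAB : (⨆ (p : G × Additive ℂˣ) (_ : p ≠ (g₀, m₀)), M p) ≤ A ⊔ B := by
      refine iSup₂_le fun p hp => ?_
      rcases eq_or_ne p.1 g₀ with h1 | h1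
      · have h2 : p.2 ≠ m₀ := fun h2 => hp (Prod.ext h1 h2)
        refine le_trans ?_ (le_trans (le_iSup₂ p.2 h2) le_sup_right)
        rw [hMp, h1]
      · exact le_trans (le_trans (hMp p ▸ inf_le_left) (le_iSup₂ p.1 h1)) le_sup_left
    have hdisA : ℒ g₀ ⊓ A = ⊥ := disjoint_iff.mp (hΓ.1 g₀)
    have hmod : (B ⊔ A) ⊓ ℒ g₀ = B := by
      rw [sup_inf_assoc_of_le A hBle, inf_comm A (ℒ g₀), hdisA, sup_bot_eq]
    have hkey : M (g₀, m₀) ⊓ (A ⊔ B) ≤ eig h (uval m₀) ⊓ B := by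
      intro x hx
      obtain ⟨hx1, hx3⟩ := Submodule.mem_inf.mp hx
      obtain ⟨hx11, hx12⟩ := Submodule.mem_inf.mp (hMp _ ▸ hx1)
      refine Submodule.mem_inf.mpr ⟨hx12, ?_⟩
      have h4 : x ∈ (B ⊔ A) ⊓ ℒ g₀ :=
        Submodule.mem_inf.mpr ⟨by rwa [sup_comm B A], hx11⟩
      rwa [hmod] at h4
    have hBle2 : B ≤ ⨆ (ν : ℂ) (_ : ν ≠ uval m₀), eig h ν := by
      refine iSup₂_le fun m hm => ?_
      refine le_trans inf_le_right ?_
      exact le_iSup₂ (f := fun (ν : ℂ) (_ : ν ≠ uval m₀) => eig h ν) (uval m)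
        (fun hc => hm (uval_inj hc))
    have hfin : Disjoint (eig h (uval m₀)) (⨆ (ν : ℂ) (_ : ν ≠ uval m₀), eig h ν) :=
      eig_indep h (uval m₀)
    have hb : M (g₀, m₀) ⊓ (⨆ (p : G × Additive ℂˣ) (_ : p ≠ (g₀, m₀)), M p) ≤ ⊥ := by
      refine le_trans (inf_le_inf_left _ hAB) (le_trans hkey ?_)
      refine le_trans (inf_le_inf_left _ hBle2) ?_
      exact le_of_eq (disjoint_iff.mp hfin)
    exact disjoint_iff.mpr (le_bot_iff.mp hb)
  -- bracket compatibility
  have hMbr : ∀ p q : G × Additive ℂˣ, ∀ x ∈ M p, ∀ y ∈ M q, ⁅x, y⁆ ∈ M (p + q) := by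
    intro p q x hx y hy
    obtain ⟨hx1, hx2⟩ := Submodule.mem_inf.mp (hMp _ ▸ hx)
    obtain ⟨hy1, hy2⟩ := Submodule.mem_inf.mp (hMp _ ▸ hy)
    rw [hMp]
    refine Submodule.mem_inf.mpr ⟨hΓ.2.2 p.1 q.1 x hx1 y hy1, ?_⟩
    rw [mem_eig] at hx2 hy2 ⊢
    have h5 : h ⁅x, y⁆ = (uval p.2 * uval q.2) • ⁅x, y⁆ := by
      rw [show h ⁅x, y⁆ = ⁅h x, h y⁆ from h.toLieHom.map_lie x y, hx2, hy2, smul_lie,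
        lie_smul, smul_smul]
    rw [h5, show (p + q).2 = p.2 + q.2 from rfl, uval_add]
  -- apply fineness
  have hseteq := hFine.2 (G × Additive ℂˣ) M ⟨hMind, hMsup, hMbr⟩
    (fun p _ => ⟨p.1, hMp p ▸ inf_le_left⟩)
  intro g
  by_cases hb : ℒ g = ⊥
  · refine ⟨1, one_ne_zero, fun x hx => ?_⟩
    rw [hb, Submodule.mem_bot] at hx
    rw [hx, show h (0:L) = 0 from h.toLinearEquiv.map_zero, smul_zero]
  · have h6 : ℒ g ∈ {V : Submodule ℂ L | V ≠ ⊥ ∧ ∃ g', ℒ g' = V} := ⟨hb, g, rfl⟩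
    rw [← hseteq] at h6
    obtain ⟨hVb, p, hp⟩ := h6
    refine ⟨uval p.2, uval_ne_zero _, fun x hx => ?_⟩
    have hx' : x ∈ M p := hp ▸ hx
    exact mem_eig.mp (Submodule.mem_inf.mp (hMp _ ▸ hx')).2

omit [DecidableEq G] in
lemma fine_of_MAD (hΓ : IsGroupGrading ℒ) (hMAD : IsMAD (Diag ℒ)) :
    IsFineGroupGrading ℒ := by
  classical
  refine ⟨hΓ, ?_⟩
  intro H _ M hM hRef
  letI : DecidableEq H := Classical.decEq H
  have hMI : DirectSum.IsInternal M :=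
    DirectSum.isInternal_submodule_of_iSupIndep_of_iSup_eq_top hM.1 hM.2.1
  -- every element of `Diag ℒ` is scalar on each `M h`
  have hsub : ∀ f ∈ Diag ℒ, f ∈ Diag M := by
    intro f hf h'
    by_cases hb : M h' = ⊥
    · refine ⟨1, one_ne_zero, fun x hx => ?_⟩
      rw [hb, Submodule.mem_bot] at hx
      rw [hx, show f (0:L) = 0 from f.toLinearEquiv.map_zero, smul_zero]
    · obtain ⟨g, hle⟩ := hRef h' hb
      obtain ⟨α, hα, hfx⟩ := hf g
      exact ⟨α, hα, fun x hx => hfx x (hle hx)⟩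
  -- the automorphisms coming from characters of `H` belong to `Diag ℒ`
  have hψDiag : ∀ ψ : H →+ Additive ℂˣ, gAut hMI hM ψ ∈ Diag ℒ := by
    intro ψ
    refine hMAD.2.2 _ (isDiag_of_mem_Diag hM.2.1 (gAut_mem_Diag hMI hM ψ)) ?_
    intro f hf x
    exact commute_of_mem_Diag hM.2.1 (gAut_mem_Diag hMI hM ψ) (hsub f hf) x
  -- every nonzero `M h'` equals some `ℒ g`
  have key : ∀ h', M h' ≠ ⊥ → ∃ g, ℒ g = M h' := by
    intro h' hb
    obtain ⟨g, hle⟩ := hRef h' hb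
    refine ⟨g, ?_⟩
    have uniq : ∀ h'', M h'' ≠ ⊥ → M h'' ≤ ℒ g → M h'' ≤ M h' := by
      intro h'' hb'' hle''
      rcases eq_or_ne h'' h' with rfl | hne
      · exact le_rfl
      exfalso
      obtain ⟨ψ, hψ⟩ := exists_char (sub_ne_zero.mpr hne)
      obtain ⟨α, hα, hfα⟩ := hψDiag ψ g
      obtain ⟨x, hxm, hx0⟩ := (Submodule.ne_bot_iff _).mp hb''
      obtain ⟨y, hym, hy0⟩ := (Submodule.ne_bot_iff _).mp hb
      have e1 : uval (ψ h'') = α := by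
        have h1 := gAut_apply_of_mem hMI hM ψ hxm
        rw [hfα x (hle'' hxm)] at h1
        have h2 : (α - uval (ψ h'')) • x = 0 := by rw [sub_smul, h1, sub_self]
        rcases smul_eq_zero.mp h2 with h3 | h3
        · exact (sub_eq_zero.mp h3).symm
        · exact absurd h3 hx0
      have e2 : uval (ψ h') = α := by
        have h1 := gAut_apply_of_mem hMI hM ψ hym
        rw [hfα y (hle hym)] at h1
        have h2 : (α - uval (ψ h')) • y = 0 := by rw [sub_smul, h1, sub_self]
        rcases smul_eq_zero.mp h2 with h3 | h3
        · exact (sub_eq_zero.mp h3).symm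
        · exact absurd h3 hy0
      apply hψ
      have h4 : ψ h'' = ψ h' := uval_inj (by rw [e1, e2])
      rw [map_sub, h4, sub_self]
    set B : Submodule ℂ L := ⨆ (h'' : H) (_ : M h'' ≤ ℒ g), M h'' with hBdef
    set A : Submodule ℂ L := ⨆ (h'' : H) (_ : ¬ M h'' ≤ ℒ g), M h'' with hAdef
    have hBle : B ≤ M h' := by
      refine iSup₂_le fun h'' hle'' => ?_
      by_cases hb'' : M h'' = ⊥
      · rw [hb'']; exact bot_le
      · exact uniq h'' hb'' hle''
    have hBleg : B ≤ ℒ g := iSup₂_le fun h'' hle'' => hle''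
    have hAle : A ≤ ⨆ (g' : G) (_ : g' ≠ g), ℒ g' := by
      refine iSup₂_le fun h'' hn => ?_
      have hb'' : M h'' ≠ ⊥ := fun hbb => hn (hbb ▸ bot_le)
      obtain ⟨g', hle'⟩ := hRef h'' hb''
      have hgg : g' ≠ g := fun he => hn (he ▸ hle')
      exact le_trans hle'
        (le_iSup₂ (f := fun (g' : G) (_ : g' ≠ g) => ℒ g') g' hgg)
    have hsupAB : (⊤ : Submodule ℂ L) ≤ B ⊔ A := by
      rw [← hM.2.1]
      refine iSup_le fun h'' => ?_
      by_cases hc : M h'' ≤ ℒ g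
      · exact le_trans (le_iSup₂ (f := fun (h'' : H) (_ : M h'' ≤ ℒ g) => M h'') h'' hc)
          le_sup_left
      · exact le_trans (le_iSup₂ (f := fun (h'' : H) (_ : ¬ M h'' ≤ ℒ g) => M h'') h'' hc)
          le_sup_right
    have hdisA : A ⊓ ℒ g = ⊥ := by
      refine le_bot_iff.mp (le_trans (inf_le_inf_right _ hAle) ?_)
      rw [inf_comm]
      exact le_of_eq (disjoint_iff.mp (hΓ.1 g))
    have hgle : ℒ g ≤ M h' := by
      intro x hx
      have h7 : x ∈ (B ⊔ A) ⊓ ℒ g :=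
        Submodule.mem_inf.mpr ⟨hsupAB Submodule.mem_top, hx⟩
      rw [sup_inf_assoc_of_le A hBleg, hdisA, sup_bot_eq] at h7
      exact hBle h7
    exact le_antisymm hgle hle
  -- every nonzero `ℒ g` contains some nonzero `M h'`
  have exis : ∀ g, ℒ g ≠ ⊥ → ∃ h', M h' ≠ ⊥ ∧ M h' ≤ ℒ g := by
    intro g hg
    by_contra hno
    push_neg at hno
    have h8 : (⊤ : Submodule ℂ L) ≤ ⨆ (g' : G) (_ : g' ≠ g), ℒ g' := by
      rw [← hM.2.1]
      refine iSup_le fun h' => ?_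
      by_cases hb : M h' = ⊥
      · rw [hb]; exact bot_le
      obtain ⟨g', hle'⟩ := hRef h' hb
      have hne : g' ≠ g := fun he => hno h' hb (he ▸ hle')
      exact le_trans hle' (le_iSup₂ (f := fun (g' : G) (_ : g' ≠ g) => ℒ g') g' hne)
    apply hg
    refine le_bot_iff.mp ?_
    have h9 : ℒ g ≤ ℒ g ⊓ ⨆ (g' : G) (_ : g' ≠ g), ℒ g' :=
      le_inf le_rfl (le_trans le_top h8)
    exact le_trans h9 (le_of_eq (disjoint_iff.mp (hΓ.1 g)))
  -- the two sets of nonzero subspaces coincide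
  ext V
  simp only [Set.mem_setOf_eq]
  constructor
  · rintro ⟨hVb, h', rfl⟩
    obtain ⟨g, hg⟩ := key h' hVb
    exact ⟨hVb, g, hg⟩
  · rintro ⟨hVb, g, rfl⟩
    obtain ⟨h', hb, hle⟩ := exis g hVb
    obtain ⟨g₂, hg₂⟩ := key h' hb
    have hgg : g₂ = g := by
      by_contra hne
      have hd : Disjoint (ℒ g₂) (ℒ g) := hΓ.1.pairwiseDisjoint hne
      have h10 : ℒ g₂ ≤ ℒ g := hg₂ ▸ hle
      exact hb (hg₂ ▸ (hd.eq_bot_of_le h10))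
    exact ⟨hVb, h', by rw [← hg₂, hgg]⟩

end S5

/-- a group grading `Γ` of a finite-dimensional complex Lie algebra `L` is a
fine group grading if and only if `Diag(Γ)` is a MAD-group in `Aut L`. -/
theorem statement5 (L : Type) [LieRing L] [LieAlgebra ℂ L] [FiniteDimensional ℂ L]
    (G : Type) [AddCommGroup G] (ℒ : G → Submodule ℂ L)
    (hΓ : IsGroupGrading ℒ) :
    IsFineGroupGrading ℒ ↔ IsMAD (Diag ℒ) := by
  classical
  letI : DecidableEq G := Classical.decEq G
  have hI : DirectSum.IsInternal ℒ :=
    DirectSum.isInternal_submodule_of_iSupIndep_of_iSup_eq_top hΓ.1 hΓ.2.1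
  constructor
  · intro hFine
    refine ⟨fun f hf => S5.isDiag_of_mem_Diag hΓ.2.1 hf,
      fun f hf f' hf' x => S5.commute_of_mem_Diag hΓ.2.1 hf hf' x,
      fun h hdiag hcomm => S5.mem_Diag_of_fine hI hΓ hFine h hdiag hcomm⟩
  · exact S5.fine_of_MAD hΓ
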